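/- Let Y be a connective cochain complex of k-vector spaces and X = Y_K its denormalization. Then for every f ∈ Y^p and g ∈ Y^q the Alexander–Whitney element aw(f ⊗ g) = (d^{p+1})^q(f ⊗ e_{{1,…,p}}) ⊗ (d^0)^p(g ⊗ e_{{1,…,q}}) lies in the joint-normalized part (X ⊗ X)_N^{p+q}, and the normalized shuffle map applied to it returns f ⊗ g: sh(aw(f ⊗ g)) = f ⊗ g ∈ Y^p ⊗ Y^q. In other words, the normalized shuffle map is a left inverse of the Alexander–Whitney map. -/

import Mathlib

/-! Statement 5: the normalized shuffle map is a left inverse of the Alexander–Whitney map,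
for the denormalization `Y_K` of a connective cochain complex `Y` of `k`-vector spaces. -/

open TensorProduct

universe u v

/-- A connective cochain complex of `k`-vector spaces. -/
structure Cx (k : Type u) [Field k] where
  Y : ℕ → Type v
  grp : ∀ n, AddCommGroup (Y n)
  mod : ∀ n, Module k (Y n)
  d : ∀ n, Y n →ₗ[k] Y (n + 1)
  dd : ∀ n (y : Y n), d (n + 1) (d n y) = 0

attribute [instance] Cx.grp Cx.mod

variable {k : Type u} [Field k]

namespace Cx

/-- Cast along an equality of degrees. -/
def yc (C : Cx k) {a b : ℕ} (h : a = b) : C.Y a →ₗ[k] C.Y b := by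
  subst h; exact LinearMap.id

/-- The denormalization `Y_K` in degree `n`: `⊕_{α ⊆ {1,…,n}} Y^{|α|}`, with subsets of
`{1,…,n}` modelled as `Finset (Fin n)` (the element `t : Fin n` represents the label `t+1`). -/
abbrev K (C : Cx k) (n : ℕ) : Type v := ∀ α : Finset (Fin n), C.Y α.card

/-- The elementary element `f ⊗ e_α` of `Y_K`. -/
def single (C : Cx k) {n : ℕ} (α : Finset (Fin n)) (f : C.Y α.card) : C.K n :=
  Pi.single α f

/-- Codegeneracy `s^j : Y_K^{n+1} → Y_K^n` (`j : Fin (n+1)` is the 0-based index; it is the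
paper's `s^{j-1}` for `j ∈ {1,…,n+1}`): on `f ⊗ e_α` it gives `f ⊗ e_{σ_j(α)}` if `j ∉ α`
and `0` otherwise; pointwise this is precomposition with the subset embedding skipping `j`. -/
noncomputable def sK (C : Cx k) (n : ℕ) (j : Fin (n + 1)) : C.K (n + 1) →ₗ[k] C.K n :=
  LinearMap.pi fun β =>
    (C.yc (Finset.card_map _)).comp (LinearMap.proj (β.map (Fin.succAboveEmb j)))

/-- The relabelling `δ` skipping the (0-based) label `a`, applied to subsets. -/
def skipSet {n : ℕ} (a : ℕ) (α : Finset (Fin n)) : Finset (Fin (n + 1)) :=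
  α.map (Fin.succAboveEmb ⟨min a n, by omega⟩)

lemma skipSet_card {n : ℕ} (a : ℕ) (α : Finset (Fin n)) : (skipSet a α).card = α.card :=
  Finset.card_map _

lemma zero_not_mem_skipSet_zero {n : ℕ} (α : Finset (Fin n)) :
    (0 : Fin (n + 1)) ∉ skipSet 0 α := by
  simp only [skipSet, Finset.mem_map, Fin.succAboveEmb_apply]
  rintro ⟨x, -, hx⟩
  exact Fin.succAbove_ne _ x (hx.trans (by ext; simp))

lemma insert_zero_card {n : ℕ} (α : Finset (Fin n)) :
    α.card + 1 = (insert (0 : Fin (n + 1)) (skipSet 0 α)).card := by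
  rw [Finset.card_insert_of_notMem (zero_not_mem_skipSet_zero α), skipSet_card]

/-- Coface `d^i : Y_K^n → Y_K^{n+1}` of the denormalization, `i = 0,…,n+1` (paper indexing):
`d^0(f ⊗ e_α) = f ⊗ e_{δ_1 α} + (df) ⊗ e_{{1} ∪ δ_1 α}`, and for `i ≥ 1`,
`d^i(f ⊗ e_α) = f ⊗ e_{δ_i α}` if `i ∉ α` and `f ⊗ (e_{δ_i α} + e_{δ_{i+1} α})` if `i ∈ α`
(note `δ_i α = δ_{i+1} α` when `i ∉ α`). -/
noncomputable def dK (C : Cx k) (n : ℕ) : ℕ → (C.K n →ₗ[k] C.K (n + 1))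
  | 0 =>
      ∑ α : Finset (Fin n),
        ((LinearMap.single k (fun β : Finset (Fin (n + 1)) => C.Y β.card) (skipSet 0 α)).comp
            ((C.yc (skipSet_card 0 α).symm).comp (LinearMap.proj α))
          + (LinearMap.single k (fun β : Finset (Fin (n + 1)) => C.Y β.card)
                (insert (0 : Fin (n + 1)) (skipSet 0 α))).comp
              ((C.yc (insert_zero_card α)).comp ((C.d α.card).comp (LinearMap.proj α))))
  | (j + 1) =>
      ∑ α : Finset (Fin n),
        ((LinearMap.single k (fun β : Finset (Fin (n + 1)) => C.Y β.card) (skipSet (j + 1) α)).comp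
            ((C.yc (skipSet_card (j + 1) α).symm).comp (LinearMap.proj α))
          + if h : ∃ hj : j < n, (⟨j, hj⟩ : Fin n) ∈ α then
              (LinearMap.single k (fun β : Finset (Fin (n + 1)) => C.Y β.card) (skipSet j α)).comp
                ((C.yc (skipSet_card j α).symm).comp (LinearMap.proj α))
            else 0)

/-- Iterated coface `(d^i)^m : Y_K^p → Y_K^{p+m}`. -/
noncomputable def dIterK (C : Cx k) (i p : ℕ) : (m : ℕ) → (C.K p →ₗ[k] C.K (p + m))
  | 0 => LinearMap.id
  | (m + 1) => (C.dK (p + m) i).comp (C.dIterK i p m)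

/-- Cast of the denormalization along an equality of degrees. -/
def kc (C : Cx k) {a b : ℕ} (h : a = b) : C.K a →ₗ[k] C.K b := by
  subst h; exact LinearMap.id

/-- The joint-normalized part `(Y_K ⊗ Y_K)_N^n = ⋂_j ker (s^j ⊗ s^j)`. -/
noncomputable def JointN (C : Cx k) (n : ℕ) : Submodule k (C.K n ⊗[k] C.K n) :=
  ⨅ (m : ℕ) (h : n = m + 1) (j : Fin (m + 1)),
    LinearMap.ker ((TensorProduct.map (C.sK m j) (C.sK m j)).comp
      (TensorProduct.map (C.kc h) (C.kc h)))

/-- `sgn(α,β)`: the sign of the permutation sorting the concatenation of the increasing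
enumerations of `α` and `β`, i.e. `(-1)` to the number of pairs `(a,b) ∈ α × β` with `b < a`. -/
def shSgn {n : ℕ} (α β : Finset (Fin n)) : ℤ :=
  (-1) ^ (∑ a ∈ α, (β.filter fun b : Fin n => (b : ℕ) < (a : ℕ)).card)

lemma card_lt_fin_succ {n : ℕ} (α : Finset (Fin n)) : α.card < n + 1 := by
  have := Finset.card_le_univ α
  simp only [Finset.card_univ, Fintype.card_fin] at this
  omega

lemma card_compl_fin {n : ℕ} (α : Finset (Fin n)) : αᶜ.card = n - α.card := by
  rw [Finset.card_compl, Fintype.card_fin]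

/-- The target `⊕_{p+q=n} Y^p ⊗ Y^q` of the normalized shuffle map. -/
abbrev ShT (C : Cx k) (n : ℕ) : Type _ :=
  ∀ p : Fin (n + 1), C.Y (p : ℕ) ⊗[k] C.Y (n - (p : ℕ))

/-- The (bilinear form of the) shuffle map: on `(f ⊗ e_α) ⊗ (g ⊗ e_β)` it is `0` unless
`β = αᶜ`, in which case it is `sgn(α,β) • (f ⊗ g)`; restricted to the joint-normalized
part this is the normalized shuffle map. -/
noncomputable def shB (C : Cx k) (n : ℕ) : C.K n →ₗ[k] C.K n →ₗ[k] C.ShT n :=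
  ∑ α : Finset (Fin n),
    shSgn α αᶜ •
      (((TensorProduct.mk k (C.Y α.card) (C.Y αᶜ.card)).compl₁₂
            (LinearMap.proj α) (LinearMap.proj αᶜ)).compr₂
        ((LinearMap.single k (fun p : Fin (n + 1) => C.Y (p : ℕ) ⊗[k] C.Y (n - (p : ℕ)))
              ⟨α.card, card_lt_fin_succ α⟩).comp
          (TensorProduct.map LinearMap.id (C.yc (card_compl_fin α)))))

/-- The normalized shuffle map `sh : (Y_K ⊗ Y_K)_N^n → ⊕_{p+q=n} Y^p ⊗ Y^q`
(as a linear map on the whole tensor square, extending it as above). -/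
noncomputable def shMap (C : Cx k) (n : ℕ) : C.K n ⊗[k] C.K n →ₗ[k] C.ShT n :=
  TensorProduct.lift (C.shB n)

lemma univ_card_fin (n : ℕ) : (Finset.univ : Finset (Fin n)).card = n := by simp

/-- The Alexander–Whitney element
`aw(f ⊗ g) = (d^{p+1})^q (f ⊗ e_{{1,…,p}}) ⊗ (d^0)^p (g ⊗ e_{{1,…,q}})`. -/
noncomputable def awEl (C : Cx k) (p q : ℕ) (f : C.Y p) (g : C.Y q) :
    C.K (p + q) ⊗[k] C.K (p + q) :=
  (C.dIterK (p + 1) p q (C.single Finset.univ (C.yc (univ_card_fin p).symm f))) ⊗ₜ[k]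
    (C.kc (Nat.add_comm q p) (C.dIterK 0 q p (C.single Finset.univ (C.yc (univ_card_fin q).symm g))))


variable (C : Cx k)

lemma yc_rfl {a : ℕ} (h : a = a) (x : C.Y a) : C.yc h x = x := rfl

lemma yc_yc {a b c : ℕ} (h : a = b) (h' : b = c) (x : C.Y a) :
    C.yc h' (C.yc h x) = C.yc (h.trans h') x := by subst h h'; rfl

lemma d_yc {a b : ℕ} (h : a = b) (x : C.Y a) :
    C.d b (C.yc h x) = C.yc (by omega) (C.d a x) := by subst h; rfl

lemma sum_single_eval {n : ℕ} {M : Type v} [AddCommGroup M] [Module k M]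
    (F : ∀ α : Finset (Fin n), C.Y α.card →ₗ[k] M) (A : Finset (Fin n)) (f : C.Y A.card) :
    (∑ α : Finset (Fin n), (F α).comp
        (LinearMap.proj (R := k) (φ := fun α : Finset (Fin n) => C.Y α.card) α))
      (Pi.single A f) = F A f := by
  rw [LinearMap.sum_apply, Finset.sum_eq_single A]
  · simp [LinearMap.proj]
  · intro α _ hα
    simp [LinearMap.proj, Pi.single_eq_of_ne hα]
  · simp

lemma dK_zero_single {n : ℕ} (A : Finset (Fin n)) (f : C.Y A.card) :
    C.dK n 0 (Pi.single A f) =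
      Pi.single (skipSet 0 A) (C.yc (skipSet_card 0 A).symm f)
        + Pi.single (insert (0 : Fin (n + 1)) (skipSet 0 A))
            (C.yc (insert_zero_card A) (C.d A.card f)) := by
  have h : C.dK n 0 = ∑ α : Finset (Fin n),
      (((LinearMap.single k (fun β : Finset (Fin (n + 1)) => C.Y β.card) (skipSet 0 α)).comp
          (C.yc (skipSet_card 0 α).symm)
        + (LinearMap.single k (fun β : Finset (Fin (n + 1)) => C.Y β.card)
              (insert (0 : Fin (n + 1)) (skipSet 0 α))).comp
            ((C.yc (insert_zero_card α)).comp (C.d α.card))).comp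
        (LinearMap.proj (R := k) (φ := fun α : Finset (Fin n) => C.Y α.card) α)) := by
    show (∑ α : Finset (Fin n), _) = _
    exact Finset.sum_congr rfl fun α _ => by ext x β : 2; rfl
  rw [h, C.sum_single_eval]
  rfl

lemma dK_succ_single {n : ℕ} (j : ℕ) (A : Finset (Fin n)) (f : C.Y A.card)
    (hj : ¬ ∃ hj : j < n, (⟨j, hj⟩ : Fin n) ∈ A) :
    C.dK n (j + 1) (Pi.single A f) =
      Pi.single (skipSet (j + 1) A) (C.yc (skipSet_card (j + 1) A).symm f) := by
  have h : C.dK n (j + 1) = ∑ α : Finset (Fin n),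
      (((LinearMap.single k (fun β : Finset (Fin (n + 1)) => C.Y β.card)
            (skipSet (j + 1) α)).comp (C.yc (skipSet_card (j + 1) α).symm)
        + if h : ∃ hj : j < n, (⟨j, hj⟩ : Fin n) ∈ α then
            (LinearMap.single k (fun β : Finset (Fin (n + 1)) => C.Y β.card)
                (skipSet j α)).comp (C.yc (skipSet_card j α).symm)
          else 0).comp
        (LinearMap.proj (R := k) (φ := fun α : Finset (Fin n) => C.Y α.card) α)) := by
    show (∑ α : Finset (Fin n), _) = _
    refine Finset.sum_congr rfl fun α _ => ?_
    split_ifs with hc <;> ext x β : 2 <;> rfl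
  rw [h, C.sum_single_eval]
  rw [dif_neg hj]
  simp

lemma sK_single_of_mem {n : ℕ} (j : Fin (n + 1)) (A : Finset (Fin (n + 1)))
    (f : C.Y A.card) (hj : j ∈ A) :
    C.sK n j (Pi.single A f) = 0 := by
  funext β
  rw [sK, LinearMap.pi_apply, LinearMap.comp_apply]
  have hne : β.map (Fin.succAboveEmb j) ≠ A := by
    intro hβ
    rw [← hβ] at hj
    simp only [Finset.mem_map, Fin.succAboveEmb_apply] at hj
    obtain ⟨x, -, hx⟩ := hj
    exact Fin.succAbove_ne j x hx
  have : (LinearMap.proj (R := k) (φ := fun α : Finset (Fin (n+1)) => C.Y α.card)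
      (β.map (Fin.succAboveEmb j))) (Pi.single A f) = 0 := by
    simp [LinearMap.proj, Pi.single_eq_of_ne hne]
  rw [this, map_zero]
  rfl

/-- `{t : t < p}` as a subset of `Fin n`. -/
def Aset (p n : ℕ) : Finset (Fin n) := Finset.univ.filter fun t => (t : ℕ) < p

/-- `{t : m ≤ t}` as a subset of `Fin n`. -/
def Tset (m n : ℕ) : Finset (Fin n) := Finset.univ.filter fun t => m ≤ (t : ℕ)

lemma mem_Aset {p n : ℕ} (x : Fin n) : x ∈ Aset p n ↔ (x : ℕ) < p := by
  simp [Aset]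

lemma mem_Tset {m n : ℕ} (x : Fin n) : x ∈ Tset m n ↔ m ≤ (x : ℕ) := by
  simp [Tset]

lemma Aset_card {p n : ℕ} (h : p ≤ n) : (Aset p n).card = p := by
  have : Aset p n = (Finset.univ : Finset (Fin p)).map (Fin.castLEEmb h) := by
    ext x
    simp only [mem_Aset, Finset.mem_map, Finset.mem_univ, true_and, Fin.castLEEmb_apply]
    constructor
    · intro hx; exact ⟨⟨x, hx⟩, by ext; simp⟩
    · rintro ⟨y, rfl⟩; simpa using y.isLt
  rw [this, Finset.card_map]
  simp

lemma Aset_compl {p n : ℕ} : (Aset p n)ᶜ = Tset p n := by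
  ext x; simp [Aset, Tset, Finset.mem_compl, not_lt]

lemma Tset_card {m n : ℕ} (h : m ≤ n) : (Tset m n).card = n - m := by
  rw [← Aset_compl, Finset.card_compl, Fintype.card_fin, Aset_card h]

lemma skipSet_Aset {p n a : ℕ} (hp : p ≤ n) (ha : p ≤ a) :
    skipSet a (Aset p n) = Aset p (n + 1) := by
  ext x
  simp only [skipSet, Finset.mem_map, Fin.succAboveEmb_apply, mem_Aset]
  constructor
  · rintro ⟨y, hy, rfl⟩
    rwa [Fin.succAbove_of_castSucc_lt _ _ (by simp only [Fin.lt_def, Fin.coe_castSucc]; omega),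
      Fin.coe_castSucc]
  · intro hx
    refine ⟨⟨(x : ℕ), by omega⟩, hx, ?_⟩
    rw [Fin.succAbove_of_castSucc_lt _ _ (by simp only [Fin.lt_def, Fin.coe_castSucc]; omega)]
    ext; simp

lemma skipSet_Tset {m n : ℕ} :
    skipSet 0 (Tset m n) = Tset (m + 1) (n + 1) := by
  ext x
  simp only [skipSet, Finset.mem_map, Fin.succAboveEmb_apply, mem_Tset]
  constructor
  · rintro ⟨y, hy, rfl⟩
    have : (⟨min 0 n, by omega⟩ : Fin (n+1)).succAbove y = y.succ := by
      rw [Fin.succAbove_of_le_castSucc]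
      simp [Fin.le_def]
    rw [this]; simp; omega
  · intro hx
    have hx1 : 1 ≤ (x : ℕ) := by omega
    refine ⟨⟨(x : ℕ) - 1, by omega⟩, by simp; omega, ?_⟩
    rw [Fin.succAbove_of_le_castSucc]
    · ext; simp; omega
    · simp [Fin.le_def]

lemma skipSet_insert {n a : ℕ} (j : Fin n) (S : Finset (Fin n)) :
    skipSet a (insert j S) = insert ((⟨min a n, by omega⟩ : Fin (n+1)).succAbove j)
      (skipSet a S) := by
  simp [skipSet, Finset.map_insert]

lemma single_set_congr {n : ℕ} {S S' : Finset (Fin n)} (h : S = S') (f : C.Y S.card) :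
    Pi.single (M := fun α : Finset (Fin n) => C.Y α.card) S f
      = Pi.single S' (C.yc (by rw [h]) f) := by subst h; rfl

lemma not_mem_Tset_lt {m n j : ℕ} (hj : j < m) (h : j < n) :
    (⟨j, h⟩ : Fin n) ∉ Tset m n := by
  rw [mem_Tset]; simp; omega

lemma insert_Tset_card {m n j : ℕ} (hj : j < m) (h : j < n) (hm : m ≤ n) :
    (insert (⟨j, h⟩ : Fin n) (Tset m n)).card = n - m + 1 := by
  rw [Finset.card_insert_of_notMem (not_mem_Tset_lt hj h), Tset_card hm]

lemma dIter_first (p : ℕ) (f : C.Y p) (m : ℕ) :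
    C.dIterK (p + 1) p m (Pi.single (Finset.univ : Finset (Fin p))
        (C.yc (univ_card_fin p).symm f)) =
      Pi.single (Aset p (p + m)) (C.yc ((Aset_card (by omega)).symm) f) := by
  induction m with
  | zero =>
    have hS : (Finset.univ : Finset (Fin p)) = Aset p (p + 0) := by
      ext x; simp [mem_Aset, x.isLt]
    show Pi.single (M := fun α : Finset (Fin p) => C.Y α.card) Finset.univ
      (C.yc (univ_card_fin p).symm f) = _
    rw [C.single_set_congr hS, C.yc_yc]
  | succ m ih =>
    show C.dK (p + m) (p + 1) (C.dIterK (p + 1) p m _) = _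
    rw [ih, C.dK_succ_single]
    · rw [C.single_set_congr (skipSet_Aset (by omega) (by omega))]
      simp only [yc_yc]
      rfl
    · rintro ⟨h1, h2⟩
      simp [mem_Aset] at h2

lemma succAbove_min_zero {n : ℕ} (j : Fin n) :
    (⟨min 0 n, by omega⟩ : Fin (n + 1)).succAbove j = j.succ := by
  rw [Fin.succAbove_of_le_castSucc]
  simp [Fin.le_def]

lemma dIter_second (q : ℕ) (g : C.Y q) (m : ℕ) :
    C.dIterK 0 q m (Pi.single (Finset.univ : Finset (Fin q))
        (C.yc (univ_card_fin q).symm g)) =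
      Pi.single (Tset m (q + m)) (C.yc (by rw [Tset_card (by omega)]; omega) g)
        + ∑ j : Fin m, Pi.single (insert (⟨(j : ℕ), by omega⟩ : Fin (q + m)) (Tset m (q + m)))
            (C.yc (by rw [insert_Tset_card (j.isLt) _ (by omega)]; omega) (C.d q g)) := by
  induction m with
  | zero =>
    have hS : (Finset.univ : Finset (Fin q)) = Tset 0 (q + 0) := by
      ext x; simp [mem_Tset]
    show Pi.single (M := fun α : Finset (Fin q) => C.Y α.card) Finset.univ
      (C.yc (univ_card_fin q).symm g) = _
    simp only [Finset.univ_eq_empty, Finset.sum_empty, add_zero]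
    rw [C.single_set_congr hS, C.yc_yc]
  | succ m ih =>
    show C.dK (q + m) 0 (C.dIterK 0 q m _) = _
    rw [ih, map_add, map_sum, C.dK_zero_single]
    have hterm : ∀ j : Fin m,
        C.dK (q + m) 0 (Pi.single (insert (⟨(j : ℕ), by omega⟩ : Fin (q + m)) (Tset m (q + m)))
            (C.yc (by rw [insert_Tset_card (j.isLt) _ (by omega)]; omega) (C.d q g))) =
          Pi.single (insert (⟨(j : ℕ) + 1, by omega⟩ : Fin (q + m + 1)) (Tset (m + 1) (q + m + 1)))
            (C.yc (by rw [insert_Tset_card (by omega) _ (by omega)]; omega) (C.d q g)) := by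
      intro j
      have hset : skipSet 0 (insert (⟨(j : ℕ), by omega⟩ : Fin (q + m)) (Tset m (q + m))) =
          insert (⟨(j : ℕ) + 1, by omega⟩ : Fin (q + m + 1)) (Tset (m + 1) (q + m + 1)) := by
        rw [skipSet_insert, skipSet_Tset, succAbove_min_zero]
        congr 1
      rw [C.dK_zero_single, C.d_yc, C.dd, map_zero, map_zero, Pi.single_zero, add_zero,
        C.single_set_congr hset]
      try simp only [yc_yc]
      try rfl
    rw [Finset.sum_congr rfl fun j _ => hterm j]
    have hTset : skipSet 0 (Tset m (q + m)) = Tset (m + 1) (q + m + 1) := skipSet_Tset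
    rw [C.single_set_congr hTset]
    have hIns : insert (0 : Fin (q + m + 1)) (skipSet 0 (Tset m (q + m))) =
        insert (⟨0, by omega⟩ : Fin (q + m + 1)) (Tset (m + 1) (q + m + 1)) := by
      rw [hTset]; rfl
    have hdval : ∀ (h1 : q = (Tset m (q + m)).card)
        (h2 : (Tset m (q + m)).card + 1 =
          (insert (0 : Fin (q + m + 1)) (skipSet 0 (Tset m (q + m)))).card),
        C.yc h2 (C.d (Tset m (q + m)).card (C.yc h1 g)) =
          C.yc (by rw [← h2, ← h1]) (C.d q g) := by
      intro h1 h2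
      rw [C.d_yc, C.yc_yc]
    rw [hdval, C.single_set_congr hIns]
    rw [Fin.sum_univ_succ]
    simp only [Fin.val_zero, Fin.val_succ, yc_yc]
    exact add_assoc _ _ _

lemma kc_single {a b : ℕ} (h : a = b) {S : Finset (Fin a)} {S' : Finset (Fin b)}
    (hS : ∀ x : Fin a, x ∈ S ↔ Fin.cast h x ∈ S') (hv : S.card = S'.card) (v : C.Y S.card) :
    C.kc h (Pi.single S v) = Pi.single S' (C.yc hv v) := by
  subst h
  have hSS : S = S' := by ext x; simpa using hS x
  subst hSS
  rfl

lemma shB_eval {n : ℕ} (A B : Finset (Fin n)) (f' : C.Y A.card) (g' : C.Y B.card) :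
    C.shB n (Pi.single A f') (Pi.single B g') =
      shSgn A Aᶜ • Pi.single (⟨A.card, card_lt_fin_succ A⟩ : Fin (n + 1))
        (f' ⊗ₜ[k] C.yc (card_compl_fin A)
          ((LinearMap.proj (R := k) (φ := fun α : Finset (Fin n) => C.Y α.card) Aᶜ)
            (Pi.single B g'))) := by
  rw [shB]
  simp only [LinearMap.sum_apply, LinearMap.smul_apply, LinearMap.compr₂_apply,
    LinearMap.compl₁₂_apply, TensorProduct.mk_apply, LinearMap.comp_apply]
  rw [Finset.sum_eq_single A]
  · simp only [LinearMap.proj_apply, Pi.single_eq_same, TensorProduct.map_tmul,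
      LinearMap.id_apply]
    rfl
  · intro α _ hα
    have : (LinearMap.proj (R := k) (φ := fun α : Finset (Fin n) => C.Y α.card) α)
        (Pi.single A f') = 0 := by
      simp [LinearMap.proj_apply, Pi.single_eq_of_ne hα]
    rw [this, TensorProduct.zero_tmul, map_zero, map_zero, smul_zero]
  · simp

lemma shSgn_Aset (p n : ℕ) : shSgn (Aset p n) (Aset p n)ᶜ = 1 := by
  rw [shSgn]
  have : ∀ a ∈ Aset p n, (((Aset p n)ᶜ).filter fun b : Fin n => (b : ℕ) < (a : ℕ)).card = 0 := by
    intro a ha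
    rw [mem_Aset] at ha
    rw [Finset.card_eq_zero, Finset.filter_eq_empty_iff]
    intro b hb
    rw [Aset_compl, mem_Tset] at hb
    omega
  rw [Finset.sum_congr rfl this]
  simp

lemma single_sh_cast {n a b : ℕ} (h : a = b) (hb : b < n + 1) (x : C.Y a) (y : C.Y (n - a)) :
    Pi.single (M := fun r : Fin (n + 1) => C.Y (r : ℕ) ⊗[k] C.Y (n - (r : ℕ)))
        (⟨a, by omega⟩ : Fin (n + 1)) (x ⊗ₜ[k] y) =
      Pi.single (⟨b, hb⟩ : Fin (n + 1)) (C.yc h x ⊗ₜ[k] C.yc (by rw [h]) y) := by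
  subst h; rfl

lemma proj_single_eq {n : ℕ} {S S' : Finset (Fin n)} (h : S' = S) (v : C.Y S.card) :
    (LinearMap.proj (R := k) (φ := fun α : Finset (Fin n) => C.Y α.card) S')
      (Pi.single S v) = C.yc (by rw [h]) v := by
  subst h
  simp only [LinearMap.proj_apply, Pi.single_eq_same]
  rfl

lemma proj_single_ne {n : ℕ} {S S' : Finset (Fin n)} (h : S' ≠ S) (v : C.Y S.card) :
    (LinearMap.proj (R := k) (φ := fun α : Finset (Fin n) => C.Y α.card) S')
      (Pi.single S v) = 0 := by
  simp [LinearMap.proj_apply, Pi.single_eq_of_ne h]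

lemma single_def {n : ℕ} (α : Finset (Fin n)) (f : C.Y α.card) :
    C.single α f = Pi.single α f := rfl
end Cx
/-- The Alexander–Whitney element lies in the joint-normalized part, and the
normalized shuffle map sends it back to `f ⊗ g` (in the summand `p + q = n`): the normalized
shuffle map is a left inverse of the Alexander–Whitney map. -/
theorem stmt_5 {k : Type u} [Field k] (C : Cx k) (p q : ℕ) (f : C.Y p) (g : C.Y q) :
    C.awEl p q f g ∈ C.JointN (p + q) ∧
      C.shMap (p + q) (C.awEl p q f g) =
        Pi.single (⟨p, by omega⟩ : Fin (p + q + 1))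
          (f ⊗ₜ[k] C.yc (by omega : q = p + q - p) g) := by
  have hx : (C.dIterK (p + 1) p q (C.single Finset.univ (C.yc (Cx.univ_card_fin p).symm f)))
      = Pi.single (Cx.Aset p (p + q)) (C.yc ((Cx.Aset_card (by omega : p ≤ p + q)).symm) f) :=
    C.dIter_first p f q
  have hT : q = (Cx.Tset p (p + q)).card := by rw [Cx.Tset_card (by omega)]; omega
  have hU : ∀ j : Fin p, q + 1 =
      (insert (⟨(j : ℕ), by omega⟩ : Fin (p + q)) (Cx.Tset p (p + q))).card := by
    intro j
    rw [Cx.insert_Tset_card (j.isLt) (by omega) (by omega)]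
    omega
  have hy : C.kc (Nat.add_comm q p)
        (C.dIterK 0 q p (C.single Finset.univ (C.yc (Cx.univ_card_fin q).symm g)))
      = Pi.single (Cx.Tset p (p + q)) (C.yc hT g)
        + ∑ j : Fin p, Pi.single (insert (⟨(j : ℕ), by omega⟩ : Fin (p + q)) (Cx.Tset p (p + q)))
            (C.yc (hU j) (C.d q g)) := by
    rw [C.single_def, C.dIter_second q g p, map_add, map_sum]
    rw [C.kc_single (Nat.add_comm q p) (S' := Cx.Tset p (p + q))
        (fun x => by simp [Cx.mem_Tset])
        (by rw [Cx.Tset_card (by omega), Cx.Tset_card (by omega)]; omega)]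
    have hterm : ∀ j : Fin p, C.kc (Nat.add_comm q p)
        (Pi.single (insert (⟨(j : ℕ), by omega⟩ : Fin (q + p)) (Cx.Tset p (q + p)))
          (C.yc (by rw [Cx.insert_Tset_card (j.isLt) (by omega) (by omega)]; omega) (C.d q g)))
        = Pi.single (insert (⟨(j : ℕ), by omega⟩ : Fin (p + q)) (Cx.Tset p (p + q)))
            (C.yc (hU j) (C.d q g)) := by
      intro j
      rw [C.kc_single (Nat.add_comm q p)
          (S' := insert (⟨(j : ℕ), by omega⟩ : Fin (p + q)) (Cx.Tset p (p + q)))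
          (fun x => by simp [Finset.mem_insert, Cx.mem_Tset, Fin.ext_iff])
          (by rw [Cx.insert_Tset_card (j.isLt) (by omega) (by omega),
              Cx.insert_Tset_card (j.isLt) (by omega) (by omega)]; omega)]
      try simp only [Cx.yc_yc]
      try rfl
    rw [Finset.sum_congr rfl fun j _ => hterm j]
    try simp only [Cx.yc_yc]
    try rfl
  have hawEl : C.awEl p q f g =
      (C.dIterK (p + 1) p q (C.single Finset.univ (C.yc (Cx.univ_card_fin p).symm f))) ⊗ₜ[k]
        (C.kc (Nat.add_comm q p)
          (C.dIterK 0 q p (C.single Finset.univ (C.yc (Cx.univ_card_fin q).symm g)))) := rfl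
  constructor
  · simp only [Cx.JointN, Submodule.mem_iInf]
    intro m h j
    rw [LinearMap.mem_ker, hawEl, hx, hy]
    simp only [LinearMap.comp_apply, TensorProduct.map_tmul]
    by_cases hj : (j : ℕ) < p
    · rw [C.kc_single h (S' := Cx.Aset p (m + 1)) (fun x => by simp [Cx.mem_Aset])
          (by rw [Cx.Aset_card (by omega), Cx.Aset_card (by omega)])]
      rw [C.sK_single_of_mem j _ _ (by rw [Cx.mem_Aset]; exact hj), TensorProduct.zero_tmul]
    · rw [map_add, map_sum]
      rw [C.kc_single h (S := Cx.Tset p (p + q)) (S' := Cx.Tset p (m + 1))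
          (fun x => by simp [Cx.mem_Tset])
          (by rw [Cx.Tset_card (by omega), Cx.Tset_card (by omega)]; omega)]
      have hterm2 : ∀ i : Fin p, C.sK m j (C.kc h
          (Pi.single (insert (⟨(i : ℕ), by omega⟩ : Fin (p + q)) (Cx.Tset p (p + q)))
            (C.yc (hU i) (C.d q g)))) = 0 := by
        intro i
        rw [C.kc_single h
            (S' := insert (⟨(i : ℕ), by omega⟩ : Fin (m + 1)) (Cx.Tset p (m + 1)))
            (fun x => by simp [Finset.mem_insert, Cx.mem_Tset, Fin.ext_iff])
            (by rw [Cx.insert_Tset_card (i.isLt) (by omega) (by omega),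
                Cx.insert_Tset_card (i.isLt) (by omega) (by omega)]; omega)]
        exact C.sK_single_of_mem j _ _
          (Finset.mem_insert_of_mem (by rw [Cx.mem_Tset]; omega))
      rw [map_add, map_sum]
      rw [C.sK_single_of_mem j _ _ (by rw [Cx.mem_Tset]; omega)]
      rw [Finset.sum_congr rfl fun i _ => hterm2 i]
      rw [Finset.sum_const_zero, add_zero, TensorProduct.tmul_zero]
  · rw [hawEl, hx, hy, Cx.shMap, TensorProduct.lift.tmul, map_add, map_sum]
    have hAc : (Cx.Aset p (p + q))ᶜ = Cx.Tset p (p + q) := Cx.Aset_compl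
    have hzero : ∀ j : Fin p, (C.shB (p + q))
        (Pi.single (Cx.Aset p (p + q)) (C.yc ((Cx.Aset_card (by omega : p ≤ p + q)).symm) f))
        (Pi.single (insert (⟨(j : ℕ), by omega⟩ : Fin (p + q)) (Cx.Tset p (p + q)))
          (C.yc (hU j) (C.d q g))) = 0 := by
      intro j
      have hne : (Cx.Aset p (p + q))ᶜ ≠
          insert (⟨(j : ℕ), by omega⟩ : Fin (p + q)) (Cx.Tset p (p + q)) := by
        rw [hAc]
        intro hEq
        have hc := congrArg Finset.card hEq
        have h1 : (Cx.Tset p (p + q)).card = p + q - p := Cx.Tset_card (by omega)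
        have h2 : (insert (⟨(j : ℕ), by omega⟩ : Fin (p + q)) (Cx.Tset p (p + q))).card
            = p + q - p + 1 := Cx.insert_Tset_card (j.isLt) (by omega) (by omega)
        omega
      rw [C.shB_eval, C.proj_single_ne hne, map_zero, TensorProduct.tmul_zero, Pi.single_zero,
        smul_zero]
    rw [Finset.sum_congr rfl (fun j _ => hzero j), Finset.sum_const_zero, add_zero]
    rw [C.shB_eval, C.proj_single_eq hAc, Cx.shSgn_Aset, one_smul]
    rw [C.single_sh_cast (Cx.Aset_card (by omega : p ≤ p + q)) (by omega : p < p + q + 1)]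
    simp only [Cx.yc_yc]
    rfl
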